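/- Let S be a nonempty set and A a commutative C*-algebra. If K₁, K₂ : S × S → A are positive definite kernels, then their pointwise product (K₁ ∘ K₂)(s,t) := K₁(s,t) K₂(s,t) is again a positive definite kernel. -/

import Mathlib

set_option maxHeartbeats 1000000
set_option synthInstance.maxHeartbeats 400000


/-- A kernel `K : S × S → A` is hermitian if `K (t, s) = K (s, t)*` for all `s, t`. -/
def IsHermitianKernel {S A : Type*} [Star A] (K : S → S → A) : Prop :=
  ∀ s t, K t s = star (K s t)

/-- A kernel `L` with values in a C*-algebra is positive definite if for every `n ≥ 1`,
all `s₁, …, sₙ ∈ S` and all `a₁, …, aₙ ∈ A` one has `∑ᵢⱼ aᵢ* L(sᵢ, sⱼ) aⱼ ≥ 0`. -/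
def IsPosDefKernel {S A : Type*} [NonUnitalCStarAlgebra A] [PartialOrder A]
    (L : S → S → A) : Prop :=
  ∀ (n : ℕ) (s : Fin n → S) (a : Fin n → A),
    0 ≤ ∑ i, ∑ j, star (a i) * L (s i) (s j) * a j

open Matrix in
open scoped ComplexOrder in
private lemma sum_swap3_aux {α : Type*} [AddCommMonoid α] {n : ℕ}
    (f : Fin n → Fin n → Fin n → α) :
    ∑ i, ∑ j, ∑ k, f i j k = ∑ k, ∑ i, ∑ j, f i j k := by
  calc ∑ i, ∑ j, ∑ k, f i j k
      = ∑ i, ∑ k, ∑ j, f i j k := Finset.sum_congr rfl fun i _ => Finset.sum_comm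
    _ = ∑ k, ∑ i, ∑ j, f i j k := Finset.sum_comm

open Matrix in
open scoped ComplexOrder in
private lemma schur_scalar_aux {n : ℕ} {M₁ M₂ : Matrix (Fin n) (Fin n) ℂ}
    (h₁ : M₁.PosSemidef) (h₂ : M₂.PosSemidef) (z : Fin n → ℂ) :
    0 ≤ ∑ i, ∑ j, star (z i) * (M₁ i j * M₂ i j) * z j := by
  obtain ⟨B, rfl⟩ : ∃ B : Matrix (Fin n) (Fin n) ℂ, M₂ = Bᴴ * B := by
    open scoped MatrixOrder in
    exact ⟨CFC.sqrt M₂, by rw [← Matrix.star_eq_conjTranspose,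
      (IsSelfAdjoint.of_nonneg (CFC.sqrt_nonneg M₂)).star_eq, CFC.sqrt_mul_sqrt_self M₂ h₂.nonneg]⟩
  have key : ∑ i, ∑ j, star (z i) * (M₁ i j * (Bᴴ * B) i j) * z j
      = ∑ k, star (fun i => B k i * z i) ⬝ᵥ (M₁ *ᵥ fun i => B k i * z i) := by
    simp only [Matrix.mul_apply, Matrix.conjTranspose_apply, dotProduct, Matrix.mulVec,
      Pi.star_apply, star_mul', Finset.mul_sum, Finset.sum_mul]
    rw [sum_swap3_aux]
    refine Finset.sum_congr rfl fun k _ => Finset.sum_congr rfl fun i _ =>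
      Finset.sum_congr rfl fun j _ => ?_
    ring
  rw [key]
  exact Finset.sum_nonneg fun k _ => h₁.dotProduct_mulVec_nonneg _

open scoped ComplexOrder in
/-- The pointwise (Schur) product of two positive definite kernels with values in a
commutative C*-algebra is again positive definite. -/
theorem posDefKernel_mul {S A : Type*} [Nonempty S]
    [NonUnitalCommCStarAlgebra A] [PartialOrder A] [StarOrderedRing A]
    (K₁ K₂ : S → S → A) (hK₁ : IsHermitianKernel K₁) (hK₂ : IsHermitianKernel K₂)
    (hK₁pd : IsPosDefKernel K₁) (hK₂pd : IsPosDefKernel K₂) :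
    IsPosDefKernel (fun s t => K₁ s t * K₂ s t) := by
  classical
  have hK₁' : ∀ u v, K₁ v u = star (K₁ u v) := hK₁
  have hK₂' : ∀ u v, K₂ v u = star (K₂ u v) := hK₂
  intro n s a
  show 0 ≤ ∑ i, ∑ j, star (a i) * (K₁ (s i) (s j) * K₂ (s i) (s j)) * a j
  set x : A := ∑ i, ∑ j, star (a i) * (K₁ (s i) (s j) * K₂ (s i) (s j)) * a j with hx
  -- `x` is selfadjoint
  have hx_sa : IsSelfAdjoint x := by
    rw [IsSelfAdjoint, hx]
    calc star (∑ i, ∑ j, star (a i) * (K₁ (s i) (s j) * K₂ (s i) (s j)) * a j)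
        = ∑ i, ∑ j, star (a j) * (K₁ (s j) (s i) * K₂ (s j) (s i)) * a i := by
          simp only [star_sum, star_mul', star_star, ← hK₁', ← hK₂']
          exact Finset.sum_congr rfl fun i _ => Finset.sum_congr rfl fun j _ => by
            simp [mul_comm, mul_assoc, mul_left_comm]
      _ = ∑ i, ∑ j, star (a i) * (K₁ (s i) (s j) * K₂ (s i) (s j)) * a j := Finset.sum_comm
  -- pass to the unitization
  rw [← Unitization.inr_nonneg_iff]
  have hx_sa' : IsSelfAdjoint (x : Unitization ℂ A) := by
    rw [IsSelfAdjoint, ← Unitization.inr_star, hx_sa.star_eq]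
  rw [StarOrderedRing.nonneg_iff_spectrum_nonneg (R := ℝ) _ hx_sa']
  intro t ht
  have hmem : (algebraMap ℝ ℂ t) ∈ spectrum ℂ (x : Unitization ℂ A) := by
    rw [← hx_sa'.spectrumRestricts.algebraMap_image]
    exact ⟨t, ht, rfl⟩
  obtain ⟨φ, hφ⟩ := WeakDual.CharacterSpace.mem_spectrum_iff_exists.mp hmem
  -- build the character on `A`
  set ψ : A → ℂ := fun b => φ ((b : Unitization ℂ A)) with hψ
  have ψ_mul : ∀ b c : A, ψ (b * c) = ψ b * ψ c := fun b c => by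
    simp only [hψ, Unitization.inr_mul, map_mul]
  have ψ3 : ∀ u v w : A, ψ (u * v * w) = ψ u * ψ v * ψ w := fun u v w => by
    rw [ψ_mul, ψ_mul]
  have ψ_star : ∀ b : A, ψ (star b) = star (ψ b) := fun b => by
    simp only [hψ, Unitization.inr_star, map_star]
  have ψ_sum : ∀ (f : Fin n → A), ψ (∑ i, f i) = ∑ i, ψ (f i) := fun f => by
    simp only [hψ]
    rw [show ((∑ i, f i : A) : Unitization ℂ A) = ∑ i, ((f i : A) : Unitization ℂ A) from
      map_sum (Unitization.inrNonUnitalStarAlgHom ℂ A) f Finset.univ, map_sum]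
  have ψ_smul : ∀ (c : ℂ) (b : A), ψ (c • b) = c * ψ b := fun c b => by
    simp only [hψ, Unitization.inr_smul, map_smul, smul_eq_mul]
  have ψ_pos : ∀ p : A, 0 ≤ p → 0 ≤ ψ p := by
    intro p hp
    have hp' : (0 : Unitization ℂ A) ≤ (p : Unitization ℂ A) := Unitization.inr_nonneg_iff.mpr hp
    have hc : CFC.sqrt ((p : Unitization ℂ A)) * CFC.sqrt ((p : Unitization ℂ A))
        = (p : Unitization ℂ A) := CFC.sqrt_mul_sqrt_self _ hp'
    have hcsa : IsSelfAdjoint (CFC.sqrt ((p : Unitization ℂ A))) :=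
      IsSelfAdjoint.of_nonneg (CFC.sqrt_nonneg _)
    calc (0 : ℂ) ≤ star (φ (CFC.sqrt ((p : Unitization ℂ A))))
          * φ (CFC.sqrt ((p : Unitization ℂ A))) := star_mul_self_nonneg _
      _ = ψ p := by rw [← map_star, hcsa.star_eq, ← map_mul, hc]
  -- the scalar matrices are positive semidefinite
  have hpsd : ∀ (K : S → S → A), IsHermitianKernel K → IsPosDefKernel K →
      Matrix.PosSemidef (Matrix.of fun i j : Fin n => ψ (K (s i) (s j))) := by
    intro K hK hKpd
    have hK' : ∀ u v, K v u = star (K u v) := hK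
    refine Matrix.PosSemidef.of_dotProduct_mulVec_nonneg ?_ ?_
    · ext i j
      simp only [Matrix.conjTranspose_apply, Matrix.of_apply]
      rw [← ψ_star, hK' (s j) (s i)]
    · intro zv
      by_cases hψ0 : ∀ b : A, ψ b = 0
      · simp [dotProduct, Matrix.mulVec, hψ0]
      · push_neg at hψ0
        obtain ⟨b₀, hb₀⟩ := hψ0
        set b : A := (ψ b₀)⁻¹ • b₀ with hbdef
        have hb : ψ b = 1 := by rw [hbdef, ψ_smul, inv_mul_cancel₀ hb₀]
        have key := ψ_pos _ (hKpd n s (fun i => zv i • b))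
        rw [ψ_sum] at key
        have hterm : ∀ i j, ψ (star (zv i • b) * K (s i) (s j) * (zv j • b))
            = star (zv i) * ψ (K (s i) (s j)) * zv j := by
          intro i j
          rw [ψ3, star_smul, ψ_smul, ψ_smul, ψ_star, hb]
          simp [mul_comm, mul_assoc, mul_left_comm]
        have : (0 : ℂ) ≤ ∑ i, ∑ j, star (zv i) * ψ (K (s i) (s j)) * zv j := by
          refine le_of_le_of_eq key ?_
          refine Finset.sum_congr rfl fun i _ => ?_
          rw [ψ_sum]
          exact Finset.sum_congr rfl fun j _ => hterm i j
        refine le_of_le_of_eq this ?_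
        simp only [dotProduct, Matrix.mulVec, Matrix.of_apply, Pi.star_apply,
          Finset.mul_sum]
        exact Finset.sum_congr rfl fun i _ => Finset.sum_congr rfl fun j _ => by ring
  -- conclude via the scalar Schur product theorem
  have main : 0 ≤ φ ((x : Unitization ℂ A)) := by
    have hfx : φ ((x : Unitization ℂ A))
        = ∑ i, ∑ j, star (ψ (a i)) * (ψ (K₁ (s i) (s j)) * ψ (K₂ (s i) (s j))) * ψ (a j) := by
      show ψ x = _
      rw [hx, ψ_sum]
      refine Finset.sum_congr rfl fun i _ => ?_
      rw [ψ_sum]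
      refine Finset.sum_congr rfl fun j _ => ?_
      rw [ψ3, ψ_mul, ψ_star]
    rw [hfx]
    exact schur_scalar_aux (hpsd K₁ hK₁ hK₁pd) (hpsd K₂ hK₂ hK₂pd) (fun i => ψ (a i))
  rw [hφ] at main
  exact Complex.zero_le_real.mp main
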